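/- Let G_D = ([m], E_D) be a graph and let q_I(G_D, p) = Σ_{J ∈ Ind(G_D), I ⊆ J} (−1)^{|J|−|I|} Π_{i∈J} p_i for independent sets I, where Ind(G_D) is the set of independent sets of G_D. If A_1,…,A_m are events with dependency graph G_D, probabilities p_i, such that A_i ∩ A_j = ∅ for every edge (i,j) ∈ E_D (extremal instance), then q_∅(G_D, p) = 1 − P(⋃_{i∈[m]} A_i). -/

import Mathlib

open MeasureTheory
open scoped Classical

private lemma stmt13_aux {Ω : Type*} [MeasurableSpace Ω] (μ : Measure Ω) [IsProbabilityMeasure μ]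
    (m : ℕ) (G : SimpleGraph (Fin m)) (A : Fin m → Set Ω)
    (hAmeas : ∀ i, MeasurableSet (A i))
    (hdep : ∀ i : Fin m, ∀ S : Finset (Fin m),
      (∀ j ∈ S, j ≠ i ∧ ¬ G.Adj i j) →
      μ (A i ∩ ⋂ j ∈ S, (A j)ᶜ) = μ (A i) * μ (⋂ j ∈ S, (A j)ᶜ))
    (hext : ∀ i j, G.Adj i j → A i ∩ A j = ∅) :
    ∀ (n : ℕ) (S : Finset (Fin m)), S.card ≤ n →
    ∑ J ∈ S.powerset, (if (∀ a ∈ J, ∀ b ∈ J, a ≠ b → ¬ G.Adj a b) then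
        (-1 : ℝ) ^ J.card * ∏ i ∈ J, (μ (A i)).toReal else 0)
      = (μ (⋂ j ∈ S, (A j)ᶜ)).toReal := by
  intro n
  induction n with
  | zero =>
    intro S hS
    have : S = ∅ := Finset.card_eq_zero.mp (Nat.le_zero.mp hS)
    subst this
    simp
  | succ n ih =>
    intro S hS
    rcases S.eq_empty_or_nonempty with rfl | ⟨i, hi⟩
    · simp
    set S' : Finset (Fin m) := S.erase i with hS'def
    have hins : insert i S' = S := Finset.insert_erase hi
    have hcardS' : S'.card ≤ n := by
      have h2 : 0 < S.card := Finset.card_pos.mpr ⟨i, hi⟩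
      rw [hS'def, Finset.card_erase_of_mem hi]
      omega
    set T : Finset (Fin m) := S'.filter (fun j => ¬ G.Adj i j) with hTdef
    have hTS' : T ⊆ S' := Finset.filter_subset _ _
    have hcardT : T.card ≤ n := le_trans (Finset.card_le_card hTS') hcardS'
    set f : Finset (Fin m) → ℝ := fun J =>
      if (∀ a ∈ J, ∀ b ∈ J, a ≠ b → ¬ G.Adj a b) then
        (-1 : ℝ) ^ J.card * ∏ i ∈ J, (μ (A i)).toReal else 0 with hfdef
    have hnotmem : i ∉ S' := Finset.notMem_erase i S
    -- LHS manipulation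
    have hsplit : ∑ J ∈ S.powerset, f J
        = ∑ J ∈ S'.powerset, f J + ∑ J ∈ S'.powerset, f (insert i J) := by
      rw [← hins, Finset.sum_powerset_insert hnotmem]
    -- the insert-part sum restricts to powerset of T
    have hvanish : ∀ J ∈ S'.powerset, J ∉ T.powerset → f (insert i J) = 0 := by
      intro J hJ hJT
      rw [Finset.mem_powerset] at hJ hJT
      obtain ⟨j, hjJ, hjT⟩ := Finset.not_subset.mp hJT
      have hjS' : j ∈ S' := hJ hjJ
      have hadj : G.Adj i j := by
        by_contra h
        exact hjT (Finset.mem_filter.mpr ⟨hjS', h⟩)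
      have hij : i ≠ j := fun h => (h ▸ hadj).ne rfl
      exact if_neg (fun h =>
        h i (Finset.mem_insert_self i J) j (Finset.mem_insert_of_mem hjJ) hij hadj)
    have hrestrict : ∑ J ∈ S'.powerset, f (insert i J) = ∑ J ∈ T.powerset, f (insert i J) :=
      (Finset.sum_subset (Finset.powerset_mono.mpr hTS') hvanish).symm
    have hinsval : ∀ J ∈ T.powerset,
        f (insert i J) = -(μ (A i)).toReal * f J := by
      intro J hJ
      rw [Finset.mem_powerset] at hJ
      have hiJ : i ∉ J := fun h => hnotmem (hTS' (hJ h))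
      have hcondiff : (∀ a ∈ insert i J, ∀ b ∈ insert i J, a ≠ b → ¬ G.Adj a b) ↔
          (∀ a ∈ J, ∀ b ∈ J, a ≠ b → ¬ G.Adj a b) := by
        constructor
        · intro h a ha b hb hab
          exact h a (Finset.mem_insert_of_mem ha) b (Finset.mem_insert_of_mem hb) hab
        · intro h
          have hnon : ∀ j ∈ J, ¬ G.Adj i j ∧ ¬ G.Adj j i := by
            intro j hj
            have hj2 := (Finset.mem_filter.mp (hJ hj)).2
            exact ⟨hj2, fun hadj => hj2 hadj.symm⟩
          intro a ha b hb hab hadj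
          rcases Finset.mem_insert.mp ha with ha' | ha' <;>
            rcases Finset.mem_insert.mp hb with hb' | hb'
          · exact hab (ha'.trans hb'.symm)
          · rw [ha'] at hadj; exact (hnon b hb').1 hadj
          · rw [hb'] at hadj; exact (hnon a ha').2 hadj
          · exact h a ha' b hb' hab hadj
      rw [hfdef]
      simp only [hcondiff]
      by_cases hc : ∀ a ∈ J, ∀ b ∈ J, a ≠ b → ¬ G.Adj a b
      · rw [if_pos hc, if_pos hc, Finset.card_insert_of_notMem hiJ,
          Finset.prod_insert hiJ, pow_succ]
        ring
      · rw [if_neg hc, if_neg hc, mul_zero]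
    have hsum2 : ∑ J ∈ T.powerset, f (insert i J)
        = -(μ (A i)).toReal * ∑ J ∈ T.powerset, f J := by
      rw [Finset.mul_sum]
      exact Finset.sum_congr rfl hinsval
    -- measure-side manipulation
    set Y : Set Ω := ⋂ j ∈ S', (A j)ᶜ with hYdef
    have hYmeas : MeasurableSet Y := by
      apply MeasurableSet.biInter (Set.to_countable _)
      intro j _
      exact (hAmeas j).compl
    have hSY : (⋂ j ∈ S, (A j)ᶜ) = (A i)ᶜ ∩ Y := by
      rw [← hins]
      exact Finset.set_biInter_insert i S' (fun j => (A j)ᶜ)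
    have hadd : μ (Y ∩ A i) + μ (Y \ A i) = μ Y :=
      measure_inter_add_diff Y (hAmeas i)
    have hdiff : Y \ A i = (A i)ᶜ ∩ Y := by
      ext x; simp [Set.mem_diff, and_comm]
    have hAiY : Y ∩ A i = A i ∩ ⋂ j ∈ T, (A j)ᶜ := by
      ext x
      simp only [Set.mem_inter_iff, Set.mem_iInter, Set.mem_compl_iff, hYdef, hTdef,
        Finset.mem_filter]
      constructor
      · rintro ⟨hY, hxA⟩
        exact ⟨hxA, fun j hj => hY j hj.1⟩
      · rintro ⟨hxA, h⟩
        refine ⟨fun j hj => ?_, hxA⟩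
        by_cases hadj : G.Adj i j
        · intro hxj
          have := hext i j hadj
          exact absurd (Set.mem_inter hxA hxj) (by rw [this]; exact Set.notMem_empty x)
        · exact h j ⟨hj, hadj⟩
    have hTprop : ∀ j ∈ T, j ≠ i ∧ ¬ G.Adj i j := by
      intro j hj
      obtain ⟨hjS', hadj⟩ := Finset.mem_filter.mp hj
      exact ⟨Finset.ne_of_mem_erase hjS', hadj⟩
    have hindep : μ (A i ∩ ⋂ j ∈ T, (A j)ᶜ) = μ (A i) * μ (⋂ j ∈ T, (A j)ᶜ) :=
      hdep i T hTprop
    -- finiteness and toReal arithmetic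
    have h1 : (μ (Y ∩ A i)).toReal + (μ (Y \ A i)).toReal = (μ Y).toReal := by
      rw [← ENNReal.toReal_add (measure_ne_top μ _) (measure_ne_top μ _), hadd]
    have h2 : (μ (Y ∩ A i)).toReal = (μ (A i)).toReal * (μ (⋂ j ∈ T, (A j)ᶜ)).toReal := by
      rw [hAiY, hindep, ENNReal.toReal_mul]
    -- put everything together
    have ihS' : ∑ J ∈ S'.powerset, f J = (μ Y).toReal := ih S' hcardS'
    have ihT : ∑ J ∈ T.powerset, f J = (μ (⋂ j ∈ T, (A j)ᶜ)).toReal := ih T hcardT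
    calc ∑ J ∈ S.powerset, f J
        = ∑ J ∈ S'.powerset, f J + ∑ J ∈ S'.powerset, f (insert i J) := hsplit
      _ = (μ Y).toReal + -(μ (A i)).toReal * (μ (⋂ j ∈ T, (A j)ᶜ)).toReal := by
          rw [ihS', hrestrict, hsum2, ihT]
      _ = (μ (Y \ A i)).toReal := by
          rw [← h1, h2]; ring
      _ = (μ (⋂ j ∈ S, (A j)ᶜ)).toReal := by rw [hdiff, ← hSY]

/-- Lemma 5.3: if `G` is a dependency graph of the events A_1,…,A_m and the
instance is extremal (adjacent events are mutually exclusive), then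
q_∅(G,p) = Σ_{J independent} (−1)^{|J|} Π_{i∈J} p_i equals 1 − P(⋃ A_i). -/
theorem stmt13 {Ω : Type*} [MeasurableSpace Ω] (μ : Measure Ω) [IsProbabilityMeasure μ]
    (m : ℕ) (G : SimpleGraph (Fin m)) (A : Fin m → Set Ω)
    (hAmeas : ∀ i, MeasurableSet (A i))
    (hdep : ∀ i : Fin m, ∀ S : Finset (Fin m),
      (∀ j ∈ S, j ≠ i ∧ ¬ G.Adj i j) →
      μ (A i ∩ ⋂ j ∈ S, (A j)ᶜ) = μ (A i) * μ (⋂ j ∈ S, (A j)ᶜ))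
    (hext : ∀ i j, G.Adj i j → A i ∩ A j = ∅) :
    ∑ J ∈ Finset.univ.filter
        (fun J : Finset (Fin m) => ∀ a ∈ J, ∀ b ∈ J, a ≠ b → ¬ G.Adj a b),
      (-1 : ℝ) ^ J.card * ∏ i ∈ J, (μ (A i)).toReal
      = 1 - (μ (⋃ i, A i)).toReal := by
  have key := stmt13_aux μ m G A hAmeas hdep hext (Finset.univ.card) Finset.univ le_rfl
  rw [Finset.sum_filter, ← Finset.powerset_univ, key]
  have hU : MeasurableSet (⋃ i, A i) := MeasurableSet.iUnion (fun i => hAmeas i)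
  have hcompl : (⋂ j ∈ (Finset.univ : Finset (Fin m)), (A j)ᶜ) = (⋃ i, A i)ᶜ := by
    simp [Set.compl_iUnion]
  rw [hcompl, measure_compl hU (measure_ne_top μ _), measure_univ,
    ENNReal.toReal_sub_of_le prob_le_one ENNReal.one_ne_top, ENNReal.toReal_one]
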